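/- The sectional K-curvature equals a constant A for all 2-planes in V if and only if g(K(X,W),K(Y,Z)) - g(K(Y,W),K(X,Z)) = A(g(X,W)g(Y,Z) - g(Y,W)g(X,Z)) for all X,Y,Z,W in V. -/

import Mathlib

open RealInnerProductSpace

section Aux

variable {V : Type*} [NormedAddCommGroup V] [InnerProductSpace ℝ V]
variable (K : V →ₗ[ℝ] V →ₗ[ℝ] V) (A : ℝ)

/-- The difference between the `K`-curvature quadri-linear form and the constant-curvature
model tensor. -/
def Dq (X Y Z W : V) : ℝ :=
  (⟪K X W, K Y Z⟫ - ⟪K Y W, K X Z⟫) - A * (⟪X, W⟫ * ⟪Y, Z⟫ - ⟪Y, W⟫ * ⟪X, Z⟫)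

variable {K A}

lemma Dq_swapL (X Y Z W : V) : Dq K A Y X Z W = -Dq K A X Y Z W := by
  simp only [Dq]; ring

lemma Dq_swapR (X Y Z W : V) : Dq K A X Y W Z = -Dq K A X Y Z W := by
  simp only [Dq]
  rw [real_inner_comm (K X Z) (K Y W), real_inner_comm (K Y Z) (K X W)]
  ring

lemma Dq_XX (X Z W : V) : Dq K A X X Z W = 0 := by
  have := Dq_swapL (K := K) (A := A) X X Z W; linarith

lemma Dq_ZZ (X Y Z : V) : Dq K A X Y Z Z = 0 := by
  have := Dq_swapR (K := K) (A := A) X Y Z Z; linarith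

lemma Dq_pairswap (hsymm : ∀ X Y : V, K X Y = K Y X) (X Y Z W : V) :
    Dq K A Z W X Y = Dq K A X Y Z W := by
  simp only [Dq]
  rw [hsymm Z Y, hsymm W X, hsymm W Y, hsymm Z X, real_inner_comm Z Y,
    real_inner_comm W X, real_inner_comm W Y, real_inner_comm Z X]
  linear_combination real_inner_comm (K X W) (K Y Z)

lemma Dq_add1 (X X' Y Z W : V) :
    Dq K A (X + X') Y Z W = Dq K A X Y Z W + Dq K A X' Y Z W := by
  simp only [Dq, map_add, LinearMap.add_apply, inner_add_left, inner_add_right]; ring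

lemma Dq_add2 (X Y Y' Z W : V) :
    Dq K A X (Y + Y') Z W = Dq K A X Y Z W + Dq K A X Y' Z W := by
  simp only [Dq, map_add, LinearMap.add_apply, inner_add_left, inner_add_right]; ring

lemma Dq_add3 (X Y Z Z' W : V) :
    Dq K A X Y (Z + Z') W = Dq K A X Y Z W + Dq K A X Y Z' W := by
  simp only [Dq, map_add, LinearMap.add_apply, inner_add_left, inner_add_right]; ring

lemma Dq_add4 (X Y Z W W' : V) :
    Dq K A X Y Z (W + W') = Dq K A X Y Z W + Dq K A X Y Z W' := by
  simp only [Dq, map_add, LinearMap.add_apply, inner_add_left, inner_add_right]; ring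

lemma Dq_smul1 (c : ℝ) (X Y Z W : V) : Dq K A (c • X) Y Z W = c * Dq K A X Y Z W := by
  simp only [Dq, map_smul, LinearMap.smul_apply, real_inner_smul_left,
    real_inner_smul_right]; ring

lemma Dq_smul2 (c : ℝ) (X Y Z W : V) : Dq K A X (c • Y) Z W = c * Dq K A X Y Z W := by
  simp only [Dq, map_smul, LinearMap.smul_apply, real_inner_smul_left,
    real_inner_smul_right]; ring

lemma Dq_smul3 (c : ℝ) (X Y Z W : V) : Dq K A X Y (c • Z) W = c * Dq K A X Y Z W := by
  simp only [Dq, map_smul, LinearMap.smul_apply, real_inner_smul_left,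
    real_inner_smul_right]; ring

lemma Dq_smul4 (c : ℝ) (X Y Z W : V) : Dq K A X Y Z (c • W) = c * Dq K A X Y Z W := by
  simp only [Dq, map_smul, LinearMap.smul_apply, real_inner_smul_left,
    real_inner_smul_right]; ring

end Aux

section Main
variable {V : Type*} [NormedAddCommGroup V] [InnerProductSpace ℝ V]
variable {K : V →ₗ[ℝ] V →ₗ[ℝ] V} {A : ℝ}

lemma Dq_bianchi (hsymm : ∀ X Y : V, K X Y = K Y X) (X Y Z W : V) :
    Dq K A X Y Z W + Dq K A Y Z X W + Dq K A Z X Y W = 0 := by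
  simp only [Dq]
  rw [hsymm Z X, hsymm Z Y, hsymm Y X, real_inner_comm Z Y, real_inner_comm Z X,
    real_inner_comm Y X]
  ring

lemma Dq_zero1 (Y Z W : V) : Dq K A 0 Y Z W = 0 := by
  simpa using Dq_smul1 (K := K) (A := A) (0 : ℝ) Y Y Z W

lemma Dq_orth (hsymm : ∀ X Y : V, K X Y = K Y X)
    (hyp : ∀ X Y : V, ‖X‖ = 1 → ‖Y‖ = 1 → ⟪X, Y⟫ = 0 →
      ⟪K X X, K Y Y⟫ - ⟪K X Y, K X Y⟫ = A)
    (X Y : V) (hXY : ⟪X, Y⟫ = 0) : Dq K A X Y Y X = 0 := by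
  by_cases hX : X = 0
  · subst hX; exact Dq_zero1 Y Y 0
  by_cases hY : Y = 0
  · subst hY; simpa using Dq_smul2 (K := K) (A := A) (0 : ℝ) X X 0 X
  set e1 : V := ‖X‖⁻¹ • X with he1
  set e2 : V := ‖Y‖⁻¹ • Y with he2
  have hn1 : ‖e1‖ = 1 := norm_smul_inv_norm hX
  have hn2 : ‖e2‖ = 1 := norm_smul_inv_norm hY
  have hi12 : ⟪e1, e2⟫ = 0 := by
    rw [he1, he2, real_inner_smul_left, real_inner_smul_right, hXY]; ring
  have hi21 : ⟪e2, e1⟫ = 0 := by rw [real_inner_comm]; exact hi12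
  have hi11 : ⟪e1, e1⟫ = 1 := by rw [real_inner_self_eq_norm_sq, hn1]; norm_num
  have hi22 : ⟪e2, e2⟫ = 1 := by rw [real_inner_self_eq_norm_sq, hn2]; norm_num
  have h := hyp e1 e2 hn1 hn2 hi12
  have hD : Dq K A e1 e2 e2 e1 = 0 := by
    simp only [Dq]
    rw [hsymm e2 e1, hi11, hi22, hi21, hi12]
    linear_combination h
  have hXe : (‖X‖ : ℝ) • e1 = X := by
    rw [he1, smul_smul, mul_inv_cancel₀ (norm_ne_zero_iff.2 hX), one_smul]
  have hYe : (‖Y‖ : ℝ) • e2 = Y := by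
    rw [he2, smul_smul, mul_inv_cancel₀ (norm_ne_zero_iff.2 hY), one_smul]
  calc Dq K A X Y Y X = Dq K A (‖X‖ • e1) (‖Y‖ • e2) (‖Y‖ • e2) (‖X‖ • e1) := by
        rw [hXe, hYe]
    _ = ‖X‖ * (‖Y‖ * (‖Y‖ * (‖X‖ * Dq K A e1 e2 e2 e1))) := by
        rw [Dq_smul1, Dq_smul2, Dq_smul3, Dq_smul4]
    _ = 0 := by rw [hD]; ring

lemma Dq_diag (hsymm : ∀ X Y : V, K X Y = K Y X)
    (hyp : ∀ X Y : V, ‖X‖ = 1 → ‖Y‖ = 1 → ⟪X, Y⟫ = 0 →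
      ⟪K X X, K Y Y⟫ - ⟪K X Y, K X Y⟫ = A)
    (X Y : V) : Dq K A X Y Y X = 0 := by
  by_cases hX : X = 0
  · subst hX; exact Dq_zero1 Y Y 0
  set c : ℝ := ⟪X, Y⟫ / ⟪X, X⟫ with hc
  set Y' : V := Y - c • X with hY'
  have hix : ⟪X, X⟫ ≠ 0 := inner_self_ne_zero.2 hX
  have horth : ⟪X, Y'⟫ = 0 := by
    rw [hY', inner_sub_right, real_inner_smul_right, hc, div_mul_cancel₀ _ hix, sub_self]
  have hYdecomp : Y = Y' + c • X := by rw [hY']; abel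
  rw [hYdecomp]
  simp [Dq_add2, Dq_add3, Dq_smul2, Dq_smul3, Dq_orth hsymm hyp X Y' horth, Dq_XX, Dq_ZZ]

lemma Dq_polar1 (h0 : ∀ X Y : V, Dq K A X Y Y X = 0) (X Y Z : V) :
    Dq K A X Y Z X = -Dq K A X Z Y X := by
  have h := h0 X (Y + Z)
  rw [Dq_add2, Dq_add3, Dq_add3, h0 X Y, h0 X Z] at h
  linarith

lemma Dq_polar2 (hsymm : ∀ X Y : V, K X Y = K Y X)
    (h0 : ∀ X Y : V, Dq K A X Y Y X = 0) (X Y Z W : V) :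
    Dq K A X Y Z W = -Dq K A X Z Y W := by
  have h := Dq_polar1 h0 (X + W) Y Z
  rw [Dq_add1, Dq_add1, Dq_add4, Dq_add4, Dq_add4, Dq_add4] at h
  have e1 : Dq K A W Y Z X = Dq K A X Z Y W := by
    rw [Dq_pairswap hsymm Z X W Y, Dq_swapL X Z W Y, Dq_swapR X Z Y W]; ring
  have e2 : Dq K A W Z Y X = Dq K A X Y Z W := by
    rw [Dq_pairswap hsymm Y X W Z, Dq_swapL X Y W Z, Dq_swapR X Y Z W]; ring
  have p1 := Dq_polar1 h0 X Y Z
  have p2 := Dq_polar1 h0 W Y Z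
  linarith

lemma Dq_eq_zero (hsymm : ∀ X Y : V, K X Y = K Y X)
    (h0 : ∀ X Y : V, Dq K A X Y Y X = 0) (X Y Z W : V) :
    Dq K A X Y Z W = 0 := by
  have hb := Dq_bianchi (A := A) hsymm X Y Z W
  have h1 : Dq K A Y Z X W = Dq K A X Y Z W := by
    rw [Dq_polar2 hsymm h0 Y Z X W, Dq_swapL X Y Z W]; ring
  have h2 : Dq K A Z X Y W = Dq K A X Y Z W := by
    rw [Dq_polar2 hsymm h0 Z X Y W, Dq_swapL Y Z X W, h1, neg_neg]
  linarith

end Main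

/-- The sectional K-curvature is a constant `A` for all 2-planes iff
`g(K(X,W),K(Y,Z)) - g(K(Y,W),K(X,Z)) = A (g(X,W) g(Y,Z) - g(Y,W) g(X,Z))`. -/
theorem constant_sectional_K_curvature_iff
    {V : Type*} [NormedAddCommGroup V] [InnerProductSpace ℝ V]
    [FiniteDimensional ℝ V] (hdim : 2 ≤ Module.finrank ℝ V)
    (K : V →ₗ[ℝ] V →ₗ[ℝ] V)
    (hsymm : ∀ X Y : V, K X Y = K Y X)
    (hadj : ∀ X Y Z : V, ⟪K X Y, Z⟫ = ⟪Y, K X Z⟫)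
    (A : ℝ) :
    (∀ X Y : V, ‖X‖ = 1 → ‖Y‖ = 1 → ⟪X, Y⟫ = 0 →
        ⟪K X X, K Y Y⟫ - ⟪K X Y, K X Y⟫ = A) ↔
    (∀ X Y Z W : V,
        ⟪K X W, K Y Z⟫ - ⟪K Y W, K X Z⟫
          = A * (⟪X, W⟫ * ⟪Y, Z⟫ - ⟪Y, W⟫ * ⟪X, Z⟫)) := by
  constructor
  · intro hyp X Y Z W
    have h := Dq_eq_zero (A := A) hsymm (Dq_diag hsymm hyp) X Y Z W
    simp only [Dq] at h
    linarith
  · intro h X Y hXn hYn hXY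
    have h1 := h X Y Y X
    have hYX : ⟪Y, X⟫ = 0 := by rw [real_inner_comm]; exact hXY
    rw [hsymm Y X, hYX, hXY, real_inner_self_eq_norm_sq X, real_inner_self_eq_norm_sq Y,
      hXn, hYn] at h1
    norm_num at h1
    rw [real_inner_self_eq_norm_sq]; exact h1
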